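/- Let C be a finite complex of finitely generated free ℤ[ℤⁿ]-modules with boundary maps ∂_j given by matrices over ℤ[ℤⁿ]. Fix an index k and let D = ∂_k* ∂_k + ∂_{k+1} ∂_{k+1}*, a square matrix over ℤ[ℤⁿ]. Then H_k(C ⊗_{ℤ[ℤⁿ]} F) = 0, where F is the field of fractions of ℤ[ℤⁿ], if and only if det(D) ≠ 0 as a Laurent polynomial. -/

import Mathlib

open scoped BigOperators
open Matrix

/-- The Laurent polynomial ring `ℤ[ℤⁿ] = ℤ[t₁^{±1},…,tₙ^{±1}]`, coded as the
group ring of `ℤⁿ` over `ℤ`. -/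
abbrev LaurentZn (n : ℕ) := AddMonoidAlgebra ℤ (Fin n → ℤ)

/-- The involution `f ↦ f*` of `ℤ[ℤⁿ]`: `(Σ aⱼ gⱼ)* = Σ aⱼ gⱼ⁻¹`. -/
noncomputable def laurentStar {n : ℕ} (f : LaurentZn n) : LaurentZn n :=
  AddMonoidAlgebra.mapDomain (fun g => -g) f

/-- The adjoint of a matrix over `ℤ[ℤⁿ]`: `(O*)_{ij} = (O_{ji})*`. -/
noncomputable def adjMat {n : ℕ} {a b : Type*} (O : Matrix a b (LaurentZn n)) :
    Matrix b a (LaurentZn n) := fun i j => laurentStar (O j i)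

/-! ### Auxiliary lemmas -/

/-- `laurentStar` as a ring homomorphism. -/
noncomputable def laurentStarRingHom (n : ℕ) : LaurentZn n →+* LaurentZn n :=
  AddMonoidAlgebra.mapDomainRingHom ℤ (negAddMonoidHom : (Fin n → ℤ) →+ (Fin n → ℤ))

lemma laurentStarRingHom_apply {n : ℕ} (f : LaurentZn n) :
    laurentStarRingHom n f = laurentStar f := rfl

lemma laurentStar_laurentStar {n : ℕ} (f : LaurentZn n) :
    laurentStar (laurentStar f) = f := by
  unfold laurentStar
  ext1
  simp only [AddMonoidAlgebra.coeff_mapDomain]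
  rw [← Finsupp.mapDomain_comp]
  simp [Function.comp]

lemma laurentStar_inj {n : ℕ} : Function.Injective (laurentStar (n := n)) := by
  intro x y h
  have := congrArg laurentStar h
  rwa [laurentStar_laurentStar, laurentStar_laurentStar] at this

/-- The key positivity computation: the constant coefficient of `f* f` is the
sum of the squares of the coefficients of `f`. -/
lemma laurentStar_mul_self_apply_zero {n : ℕ} (f : LaurentZn n) :
    (laurentStar f * f).coeff 0 = ∑ a ∈ f.coeff.support, f.coeff a * f.coeff a := by
  classical
  rw [AddMonoidAlgebra.coeff_mul]
  unfold laurentStar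
  rw [AddMonoidAlgebra.coeff_mapDomain]
  rw [Finsupp.sum_mapDomain_index (by intro b; simp) (by
    intro b m₁ m₂
    rw [← Finsupp.sum_add]
    congr 1; funext a₂ b₂; split_ifs <;> ring)]
  rw [Finsupp.sum]
  apply Finset.sum_congr rfl
  intro a ha
  have : (f.coeff.sum fun a₂ b₂ => if -a + a₂ = 0 then f.coeff a * b₂ else 0) = f.coeff a * f.coeff a := by
    rw [Finsupp.sum]
    rw [Finset.sum_eq_single a]
    · simp
    · intro b hb hba; rw [if_neg]; intro h; exact hba (neg_add_eq_zero.mp h).symm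
    · intro h; simp [Finsupp.notMem_support_iff.mp h]
  exact this

/-- Positivity over `ℤ[ℤⁿ]`: if `∑ wᵢ* wᵢ = 0` then `w = 0`. -/
lemma laurentStar_sum_sq_eq_zero {n : ℕ} {ι : Type} [Fintype ι] (w : ι → LaurentZn n)
    (h : ∑ i, laurentStar (w i) * w i = 0) : w = 0 := by
  classical
  have h0 : (∑ i, ∑ a ∈ (w i).coeff.support, (w i).coeff a * (w i).coeff a) = 0 := by
    have := congrArg (fun f : LaurentZn n => f.coeff 0) h
    rw [AddMonoidAlgebra.coeff_sum, Finsupp.finset_sum_apply] at this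
    simpa [laurentStar_mul_self_apply_zero] using this
  have hnn : ∀ i ∈ (Finset.univ : Finset ι),
      (0:ℤ) ≤ ∑ a ∈ (w i).coeff.support, (w i).coeff a * (w i).coeff a := fun i _ =>
    Finset.sum_nonneg fun a _ => mul_self_nonneg _
  have hiz := (Finset.sum_eq_zero_iff_of_nonneg hnn).mp h0
  funext i
  have hz := (Finset.sum_eq_zero_iff_of_nonneg fun a _ => mul_self_nonneg ((w i).coeff a)).mp
    (hiz i (Finset.mem_univ i))
  ext a
  by_cases ha : a ∈ (w i).coeff.support
  · simpa using mul_self_eq_zero.mp (hz a ha)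
  · simpa using Finsupp.notMem_support_iff.mp ha

/-- The extension of `laurentStar` to the fraction field. -/
noncomputable def sigmaF (n : ℕ) (F : Type*) [Field F] [Algebra (LaurentZn n) F]
    [IsFractionRing (LaurentZn n) F] : F →+* F :=
  IsFractionRing.lift (g := (algebraMap (LaurentZn n) F).comp (laurentStarRingHom n))
    (by
      apply Function.Injective.comp (IsFractionRing.injective (LaurentZn n) F)
      intro x y hxy
      apply laurentStar_inj
      rwa [← laurentStarRingHom_apply, ← laurentStarRingHom_apply])

section FractionField
variable (n : ℕ) (F : Type*) [Field F] [Algebra (LaurentZn n) F]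
    [IsFractionRing (LaurentZn n) F]

lemma sigmaF_algebraMap (r : LaurentZn n) :
    sigmaF n F (algebraMap (LaurentZn n) F r) = algebraMap (LaurentZn n) F (laurentStar r) := by
  rw [sigmaF, IsFractionRing.lift_algebraMap]
  simp [laurentStarRingHom_apply]

lemma sigmaF_sigmaF (x : F) : sigmaF n F (sigmaF n F x) = x := by
  obtain ⟨a, b, hb, rfl⟩ := IsFractionRing.div_surjective (A := LaurentZn n) x
  rw [map_div₀, map_div₀, sigmaF_algebraMap, sigmaF_algebraMap, sigmaF_algebraMap,
    sigmaF_algebraMap, laurentStar_laurentStar, laurentStar_laurentStar]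

/-- Positivity over the fraction field: if `∑ σ(vᵢ) vᵢ = 0` then `v = 0`. -/
lemma sigmaF_pos {ι : Type} [Fintype ι] (v : ι → F)
    (h : ∑ i, sigmaF n F (v i) * v i = 0) : v = 0 := by
  obtain ⟨b, hb⟩ := IsLocalization.exist_integer_multiples_of_finite
    (nonZeroDivisors (LaurentZn n)) v
  choose w hw using hb
  have hφb : algebraMap (LaurentZn n) F b ≠ 0 :=
    (map_ne_zero_iff _ (IsFractionRing.injective (LaurentZn n) F)).mpr
      (nonZeroDivisors.ne_zero b.2)
  have key : ∑ i, laurentStar (w i) * w i = 0 := by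
    apply IsFractionRing.injective (LaurentZn n) F
    rw [map_zero, map_sum]
    have : ∀ i, algebraMap (LaurentZn n) F (laurentStar (w i) * w i)
        = (sigmaF n F (algebraMap (LaurentZn n) F b) * algebraMap (LaurentZn n) F b)
          * (sigmaF n F (v i) * v i) := by
      intro i
      rw [_root_.map_mul, ← sigmaF_algebraMap]
      have hwi : algebraMap (LaurentZn n) F (w i) = algebraMap (LaurentZn n) F b * v i := by
        rw [hw i, Algebra.smul_def]
      rw [hwi, _root_.map_mul]
      ring
    rw [Finset.sum_congr rfl fun i _ => this i, ← Finset.mul_sum, h, mul_zero]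
  have hw0 := laurentStar_sum_sq_eq_zero w key
  funext i
  have : algebraMap (LaurentZn n) F b * v i = 0 := by
    rw [← Algebra.smul_def, ← hw i]
    simp [congrFun hw0 i]
  exact (mul_eq_zero.mp this).resolve_left hφb

end FractionField

/-- The hermitian pairing identity `⟨x, M† M x⟩ = ⟨Mx, Mx⟩`. -/
lemma pair_identity {F : Type*} [CommRing F] (σ : F →+* F) {a b : ℕ}
    (M : Matrix (Fin a) (Fin b) F) (x : Fin b → F) :
    ∑ j, σ (x j) * ((Mᵀ.map σ) *ᵥ (M *ᵥ x)) j
      = ∑ i, σ ((M *ᵥ x) i) * (M *ᵥ x) i := by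
  simp only [Matrix.mulVec, dotProduct, Matrix.map_apply, Matrix.transpose_apply,
    map_sum, _root_.map_mul, Finset.mul_sum, Finset.sum_mul]
  rw [Finset.sum_comm]
  refine Finset.sum_congr rfl fun i _ => ?_
  rw [Finset.sum_comm]
  exact Finset.sum_congr rfl fun j _ => Finset.sum_congr rfl fun k _ => by ring

lemma adj_adj {F : Type*} [CommRing F] (σ : F →+* F) (hσ : ∀ x, σ (σ x) = x)
    {a b : ℕ} (M : Matrix (Fin a) (Fin b) F) :
    ((Mᵀ.map σ)ᵀ.map σ) = M := by
  ext i j; simp [hσ]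

/-- let `C` be a complex of finitely generated free
`ℤ[ℤⁿ]`-modules with `∂_k` and `∂_{k+1}` given by the matrices `P`, `Q`
(`P * Q = 0`), and let `D = ∂_k* ∂_k + ∂_{k+1} ∂_{k+1}*`.  Then
`H_k(C ⊗ F) = 0` (i.e. `ker(∂_k ⊗ F) = im(∂_{k+1} ⊗ F)`), where `F` is the
field of fractions of `ℤ[ℤⁿ]`, if and only if `det D ≠ 0` as a Laurent
polynomial. -/
theorem homology_vanishes_iff_det_laplacian_ne_zero
    (n : ℕ) (F : Type*) [Field F] [Algebra (LaurentZn n) F]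
    [IsFractionRing (LaurentZn n) F]
    (bkm1 bk bk1 : ℕ)
    (P : Matrix (Fin bkm1) (Fin bk) (LaurentZn n))
    (Q : Matrix (Fin bk) (Fin bk1) (LaurentZn n))
    (hPQ : P * Q = 0) :
    LinearMap.ker (Matrix.toLin' (P.map (algebraMap (LaurentZn n) F))) =
        LinearMap.range (Matrix.toLin' (Q.map (algebraMap (LaurentZn n) F))) ↔
      Matrix.det (adjMat P * P + Q * adjMat Q) ≠ 0 := by
  classical
  set φ := algebraMap (LaurentZn n) F with hφdef
  set σ := sigmaF n F with hσdef
  have hσσ : ∀ x, σ (σ x) = x := sigmaF_sigmaF n F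
  set P' : Matrix (Fin bkm1) (Fin bk) F := P.map φ with hP'
  set Q' : Matrix (Fin bk) (Fin bk1) F := Q.map φ with hQ'
  -- the mapped laplacian
  have hadjP : (adjMat P).map φ = P'ᵀ.map σ := by
    ext i j
    simp only [Matrix.map_apply, Matrix.transpose_apply, adjMat, hP']
    rw [sigmaF_algebraMap]
  have hadjQ : (adjMat Q).map φ = Q'ᵀ.map σ := by
    ext i j
    simp only [Matrix.map_apply, Matrix.transpose_apply, adjMat, hQ']
    rw [sigmaF_algebraMap]
  have hDmap : (adjMat P * P + Q * adjMat Q).map φ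
      = P'ᵀ.map σ * P' + Q' * (Q'ᵀ.map σ) := by
    rw [Matrix.map_add _ (map_add φ), Matrix.map_mul, Matrix.map_mul, hadjP, hadjQ]
  have hPQ' : P' * Q' = 0 := by
    rw [hP', hQ', ← Matrix.map_mul, hPQ, Matrix.map_zero _ (map_zero φ)]
  -- the determinant condition transported to `F`
  have hdet_iff : Matrix.det (adjMat P * P + Q * adjMat Q) ≠ 0 ↔
      Matrix.det (P'ᵀ.map σ * P' + Q' * (Q'ᵀ.map σ)) ≠ 0 := by
    rw [← hDmap, ← RingHom.mapMatrix_apply, ← RingHom.map_det]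
    exact (map_ne_zero_iff φ (IsFractionRing.injective (LaurentZn n) F)).symm
  -- splitting a vanishing sum of two "norms"
  have hsplit : ∀ {a b : ℕ} (x : Fin a → F) (y : Fin b → F),
      ((∑ i, σ (x i) * x i) + ∑ j, σ (y j) * y j) = 0 → x = 0 ∧ y = 0 := by
    intro a b x y hxy
    have h0 : Sum.elim x y = 0 := by
      apply sigmaF_pos n F
      rw [Fintype.sum_sum_type]
      simpa using hxy
    exact ⟨funext fun i => congrFun h0 (Sum.inl i), funext fun j => congrFun h0 (Sum.inr j)⟩
  have hposF : ∀ {a : ℕ} (x : Fin a → F), (∑ i, σ (x i) * x i) = 0 → x = 0 := by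
    intro a x hx
    have := hsplit x (0 : Fin 0 → F) (by simpa using hx)
    exact this.1
  -- the identity for the `Q`-side
  have hQside : ∀ v : Fin bk → F,
      ∑ j, σ (v j) * (Q' *ᵥ ((Q'ᵀ.map σ) *ᵥ v)) j
        = ∑ i, σ (((Q'ᵀ.map σ) *ᵥ v) i) * ((Q'ᵀ.map σ) *ᵥ v) i := by
    intro v
    have h2 := pair_identity σ (Q'ᵀ.map σ) v
    rwa [adj_adj σ hσσ Q'] at h2
  have hPside : ∀ y : Fin bkm1 → F,
      ∑ j, σ (y j) * (P' *ᵥ ((P'ᵀ.map σ) *ᵥ y)) j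
        = ∑ i, σ (((P'ᵀ.map σ) *ᵥ y) i) * ((P'ᵀ.map σ) *ᵥ y) i := by
    intro y
    have h2 := pair_identity σ (P'ᵀ.map σ) y
    rwa [adj_adj σ hσσ P'] at h2
  -- a vector killed by the laplacian is killed by `P'` and by `Q'ᵀ.map σ`
  have quad : ∀ v : Fin bk → F, (P'ᵀ.map σ * P' + Q' * (Q'ᵀ.map σ)) *ᵥ v = 0 →
      P' *ᵥ v = 0 ∧ (Q'ᵀ.map σ) *ᵥ v = 0 := by
    intro v hv
    refine hsplit _ _ ?_
    have hz : ∑ j, σ (v j) * ((P'ᵀ.map σ * P' + Q' * (Q'ᵀ.map σ)) *ᵥ v) j = 0 := by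
      rw [hv]; simp
    rw [Matrix.add_mulVec, ← Matrix.mulVec_mulVec, ← Matrix.mulVec_mulVec] at hz
    simp only [Pi.add_apply, mul_add, Finset.sum_add_distrib] at hz
    rw [pair_identity σ P' v, hQside v] at hz
    exact hz
  rw [hdet_iff]
  constructor
  · -- homology vanishes → det ≠ 0
    intro hker
    rw [Ne, ← Matrix.exists_mulVec_eq_zero_iff]
    rintro ⟨v, hv0, hv⟩
    obtain ⟨hPv, hQv⟩ := quad v hv
    have hvmem : v ∈ LinearMap.ker (Matrix.toLin' P') := by
      rw [LinearMap.mem_ker, Matrix.toLin'_apply, hPv]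
    rw [hker] at hvmem
    obtain ⟨y, hy⟩ := LinearMap.mem_range.mp hvmem
    rw [Matrix.toLin'_apply] at hy
    apply hv0
    rw [← hy]
    apply hposF
    have := pair_identity σ Q' y
    rw [Matrix.mulVec_mulVec] at this
    rw [← this]
    have hQ'v : (Q'ᵀ.map σ * Q') *ᵥ y = 0 := by
      rw [← Matrix.mulVec_mulVec, hy, hQv]
    rw [hQ'v]
    simp
  · -- det ≠ 0 → homology vanishes
    intro hdet
    have hunit : IsUnit (P'ᵀ.map σ * P' + Q' * (Q'ᵀ.map σ)).det := isUnit_iff_ne_zero.mpr hdet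
    ext v
    simp only [LinearMap.mem_ker, LinearMap.mem_range, Matrix.toLin'_apply]
    constructor
    · intro hPv
      -- solve D' u = v
      set D' := P'ᵀ.map σ * P' + Q' * (Q'ᵀ.map σ) with hD'
      have hDu : D' *ᵥ (D'⁻¹ *ᵥ v) = v := by
        rw [Matrix.mulVec_mulVec, Matrix.mul_nonsing_inv _ hunit, Matrix.one_mulVec]
      set u := D'⁻¹ *ᵥ v with hu
      have hveq : v = (P'ᵀ.map σ) *ᵥ (P' *ᵥ u) + Q' *ᵥ ((Q'ᵀ.map σ) *ᵥ u) := by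
        conv_lhs => rw [← hDu]
        rw [hD', Matrix.add_mulVec, ← Matrix.mulVec_mulVec, ← Matrix.mulVec_mulVec]
      -- P' annihilates the first summand
      have hP1 : P' *ᵥ ((P'ᵀ.map σ) *ᵥ (P' *ᵥ u)) = 0 := by
        have h0 : P' *ᵥ v = 0 := hPv
        rw [hveq, Matrix.mulVec_add] at h0
        have h2 : P' *ᵥ (Q' *ᵥ ((Q'ᵀ.map σ) *ᵥ u)) = 0 := by
          rw [Matrix.mulVec_mulVec, hPQ']
          simp
        rw [h2, add_zero] at h0
        exact h0
      have hA0 : (P'ᵀ.map σ) *ᵥ (P' *ᵥ u) = 0 := by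
        apply hposF
        rw [← hPside (P' *ᵥ u), hP1]
        simp
      refine ⟨(Q'ᵀ.map σ) *ᵥ u, ?_⟩
      rw [hveq, hA0, zero_add]
    · rintro ⟨y, rfl⟩
      rw [Matrix.mulVec_mulVec, hPQ']
      simp
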